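/- Consider a finite Markov game with state set S, action sets A_1,…,A_n, kernel P, reward r, and discount γ ∈ [0,1). Let π be a stochastic action-dependent joint policy associated with an ADG G_d = (N, E_d), and suppose π is G_d-locally optimal, i.e., for every i ∈ N, s ∈ S and a'_{N_d(i)}: E_{π_{-N_d(i)}}[Q^{V^π}(s, a'_{N_d(i)}, a_{-N_d(i)})] = max_{a_i ∈ A_i} E_{π_{-N_d[i]}}[Q^{V^π}(s, a'_{N_d(i)}, a_i, a_{-N_d[i]})]. Let G_c = (N, E_c) be a CG of the function Q^{V^π}. If N_d(i) = N_c(i^{[+]}) for every i ∈ N, then π is globally optimal: V^π = V^*. -/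

import Mathlib

/-- `N_c(S)`: the set of neighbors of a set `S` of vertices in an undirected graph,
excluding `S` itself. -/
def ncSet {n : ℕ} (Gc : SimpleGraph (Fin n)) (S : Set (Fin n)) : Set (Fin n) :=
  (⋃ j ∈ S, Gc.neighborSet j) \ S

/-- `G_c` is a coordination graph (CG) of `Q : S × A → ℝ`: there is a family of local
value functions `q i j`, one for each edge `(i,j) ∈ E_c` (with `i < j`, so each
undirected edge is counted once; the family vanishes off the edges), such that
`Q(s,a) = Σ_{(i,j)∈E_c} q i j (s, a_i, a_j)`. -/
def IsCG {n : ℕ} {St : Type*} {A : Fin n → Type*} (Gc : SimpleGraph (Fin n))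
    (Q : St → (∀ i, A i) → ℝ) : Prop :=
  ∃ q : (i : Fin n) → (j : Fin n) → St → A i → A j → ℝ,
    (∀ i j, ¬(i < j ∧ Gc.Adj i j) → ∀ s ai aj, q i j s ai aj = 0) ∧
    ∀ s a, Q s a = ∑ i, ∑ j, q i j s (a i) (a j)

/-- Combine clamped values `a'` (on the coordinates in `F`) with free values `b`
(on the coordinates outside `F`) into a full joint action. -/
def comb {n : ℕ} {A : Fin n → Type*} (F : Finset (Fin n)) (a' : ∀ i, A i)
    (b : (j : {j : Fin n // j ∉ F}) → A j.1) : ∀ i, A i :=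
  fun m => if h : m ∉ F then b ⟨m, h⟩ else a' m

/-- The clamped expectation `E_{π_{-F}}[f(s, a'_F, a_{-F})]`: the coordinates in `F`
are clamped to the values of `a'`, and the agents outside `F` draw their actions from
their (action-dependent) policies, each `π j` conditioning on the actions of its
in-neighbors `N_d(j) = {k | Ed k j}` in the combined action vector. -/
def clampedExp {n : ℕ} {St : Type*} {A : Fin n → Type*} [∀ i, Fintype (A i)]
    (Ed : Fin n → Fin n → Prop) [DecidableRel Ed]
    (π : (i : Fin n) → St → ((j : {j : Fin n // Ed j i}) → A j.1) → A i → ℝ)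
    (F : Finset (Fin n)) (s : St) (a' : ∀ i, A i)
    (f : (∀ i, A i) → ℝ) : ℝ :=
  ∑ b : (j : {j : Fin n // j ∉ F}) → A j.1,
    (∏ j : {j : Fin n // j ∉ F},
        π j.1 s (fun k => comb F a' b k.1) (b j)) * f (comb F a' b)

/-- `π` is a (stochastic action-dependent) joint policy: each conditional `π i s c`
is a probability distribution on `A i`. -/
def IsPolicy {n : ℕ} {St : Type*} {A : Fin n → Type*} [∀ i, Fintype (A i)]
    (Ed : Fin n → Fin n → Prop)
    (π : (i : Fin n) → St → ((j : {j : Fin n // Ed j i}) → A j.1) → A i → ℝ) : Prop :=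
  ∀ (i : Fin n) (s : St) (c : (j : {j : Fin n // Ed j i}) → A j.1),
    (∀ ai, 0 ≤ π i s c ai) ∧ ∑ ai, π i s c ai = 1

/-- `π` is `G_d`-locally optimal with respect to `Q`: for every agent `i`, state `s`,
and clamped values `a'` on `N_d(i)`,
`E_{π_{-N_d(i)}}[Q(s, a'_{N_d(i)}, a_{-N_d(i)})]
  = max_{a_i} E_{π_{-N_d[i]}}[Q(s, a'_{N_d(i)}, a_i, a_{-N_d[i]})]`. -/
def GdLocallyOpt {n : ℕ} {St : Type*} {A : Fin n → Type*}
    [∀ i, Fintype (A i)] [∀ i, Nonempty (A i)]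
    (Ed : Fin n → Fin n → Prop) [DecidableRel Ed]
    (π : (i : Fin n) → St → ((j : {j : Fin n // Ed j i}) → A j.1) → A i → ℝ)
    (Q : St → (∀ i, A i) → ℝ) : Prop :=
  ∀ (i : Fin n) (s : St) (a' : ∀ j, A j),
    clampedExp Ed π (Finset.univ.filter fun j => Ed j i) s a' (Q s)
      = ⨆ ai : A i, clampedExp Ed π (Finset.univ.filter fun j => Ed j i ∨ j = i) s
          (Function.update a' i ai) (Q s)

/-- The one-step lookahead value `Q^V(s,a) = r(s,a) + γ Σ_{s'} P(s'|s,a) V(s')`. -/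
def QV {n : ℕ} {St : Type*} [Fintype St] {A : Fin n → Type*}
    (P : St → (∀ i, A i) → St → ℝ) (r : St → (∀ i, A i) → ℝ) (γ : ℝ)
    (V : St → ℝ) : St → (∀ i, A i) → ℝ :=
  fun s a => r s a + γ * ∑ s', P s a s' * V s'

set_option linter.unusedSectionVars false
section Helpers
open Finset

open scoped Classical

variable {n : ℕ} {St : Type*} {A : Fin n → Type*} [∀ i, Fintype (A i)]
variable (Ed : Fin n → Fin n → Prop) [DecidableRel Ed]
variable (π : (i : Fin n) → St → ((j : {j : Fin n // Ed j i}) → A j.1) → A i → ℝ)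

lemma comb_mem {F : Finset (Fin n)} {a' : ∀ i, A i} {b} {m : Fin n} (h : m ∈ F) :
    comb F a' b m = a' m := dif_neg (not_not_intro h)

lemma comb_not_mem {F : Finset (Fin n)} {a' : ∀ i, A i} {b} {m : Fin n} (h : m ∉ F) :
    comb F a' b m = b ⟨m, h⟩ := dif_pos h

/-- full-profile weight -/
noncomputable def w (F : Finset (Fin n)) (s : St) (a' a : ∀ i, A i) : ℝ :=
  if ∀ p ∈ F, a p = a' p then ∏ j ∈ Fᶜ, π j s (fun k => a k.1) (a j) else 0

lemma clampedExp_eq (F : Finset (Fin n)) (s : St) (a' : ∀ i, A i) (f : (∀ i, A i) → ℝ) :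
    clampedExp Ed π F s a' f = ∑ a : ∀ i, A i, w Ed π F s a' a * f a := by
  have hw : ∀ a : ∀ i, A i, w Ed π F s a' a * f a =
      if ∀ p ∈ F, a p = a' p then (∏ j ∈ Fᶜ, π j s (fun k => a k.1) (a j)) * f a else 0 := by
    intro a; unfold w; split <;> simp
  rw [Fintype.sum_congr _ _ hw, ← Finset.sum_filter]
  unfold clampedExp
  refine Finset.sum_bij' (fun b _ => comb F a' b) (fun a _ => fun j => a j.1)
    ?_ ?_ ?_ ?_ ?_
  · intro b _
    simp only [Finset.mem_filter, Finset.mem_univ, true_and]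
    intro p hp; exact comb_mem hp
  · intro a _; exact Finset.mem_univ _
  · intro b _
    funext j
    exact comb_not_mem j.2
  · intro a ha
    simp only [Finset.mem_filter, Finset.mem_univ, true_and] at ha
    funext m
    show comb F a' (fun j => a j.1) m = a m
    by_cases hm : m ∉ F
    · rw [comb_not_mem hm]
    · rw [comb_mem (not_not.1 hm)]; exact (ha m (not_not.1 hm)).symm
  · intro b _
    congr 1
    rw [Finset.prod_subtype Fᶜ (fun x => Finset.mem_compl) 
        (fun m => π m s (fun k => comb F a' b k.1) (comb F a' b m))]
    refine Finset.prod_congr rfl fun j _ => ?_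
    rw [comb_not_mem j.2]

lemma clampedExp_full (s : St) (a' : ∀ i, A i) (f : (∀ i, A i) → ℝ) :
    clampedExp Ed π Finset.univ s a' f = f a' := by
  rw [clampedExp_eq, Finset.sum_eq_single a']
  · unfold w
    rw [if_pos (fun p _ => rfl)]
    simp
  · intro a _ ha
    unfold w
    rw [if_neg, zero_mul]
    intro h
    exact ha (funext fun p => h p (Finset.mem_univ p))
  · intro h; exact absurd (Finset.mem_univ a') h

lemma clampedExp_add (F : Finset (Fin n)) (s : St) (a' : ∀ i, A i)
    (f g : (∀ i, A i) → ℝ) :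
    clampedExp Ed π F s a' (fun a => f a + g a)
      = clampedExp Ed π F s a' f + clampedExp Ed π F s a' g := by
  unfold clampedExp
  rw [← Finset.sum_add_distrib]
  exact Finset.sum_congr rfl fun b _ => by ring

lemma clampedExp_ext (F : Finset (Fin n)) (s : St) (Δ : Fin n → Prop)
    (a' a'' : ∀ i, A i) (f : (∀ i, A i) → ℝ)
    (hagree : ∀ k, ¬ Δ k → a' k = a'' k)
    (hfree : ∀ j : Fin n, j ∉ F → ∀ k, Ed k j → ¬ Δ k)
    (hf : ∀ a b : ∀ i, A i, (∀ p, ¬ Δ p → a p = b p) → f a = f b) :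
    clampedExp Ed π F s a' f = clampedExp Ed π F s a'' f := by
  unfold clampedExp
  refine Finset.sum_congr rfl fun b _ => ?_
  have hc : ∀ p, ¬ Δ p → comb F a' b p = comb F a'' b p := by
    intro p hp
    by_cases hpF : p ∉ F
    · rw [comb_not_mem hpF, comb_not_mem hpF]
    · rw [comb_mem (not_not.1 hpF), comb_mem (not_not.1 hpF)]; exact hagree p hp
  congr 1
  · refine Finset.prod_congr rfl fun j _ => ?_
    congr 1
    funext k
    exact hc k.1 (hfree j.1 j.2 k.1 k.2)
  · exact hf _ _ hc

lemma w_cond_iff (F : Finset (Fin n)) {m : Fin n} (hm : m ∉ F)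
    (a' a : ∀ i, A i) :
    (∀ p ∈ insert m F, a p = Function.update a' m (a m) p) ↔ (∀ p ∈ F, a p = a' p) := by
  constructor
  · intro h p hp
    have := h p (Finset.mem_insert_of_mem hp)
    rwa [Function.update_of_ne (fun hpm => hm (by rwa [hpm] at hp)) _ _] at this
  · intro h p hp
    rcases Finset.mem_insert.1 hp with rfl | hp
    · rw [Function.update_self]
    · rw [Function.update_of_ne (fun hpm => hm (by rwa [hpm] at hp)) _ _]; exact h p hp

lemma peel (F : Finset (Fin n)) (m : Fin n) (hm : m ∉ F)
    (hnd : ∀ k, Ed k m → k ∈ F) (s : St) (a' : ∀ i, A i) (f : (∀ i, A i) → ℝ) :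
    clampedExp Ed π F s a' f
      = ∑ v : A m, π m s (fun k => a' k.1) v *
          clampedExp Ed π (insert m F) s (Function.update a' m v) f := by
  have hcollapse : ∀ a : ∀ i, A i,
      (∑ v : A m, π m s (fun k => a' k.1) v *
        (w Ed π (insert m F) s (Function.update a' m v) a * f a))
      = w Ed π F s a' a * f a := by
    intro a
    rw [Finset.sum_eq_single (a m)]
    · -- main term
      rw [← mul_assoc]
      congr 1
      unfold w
      by_cases hcond : ∀ p ∈ F, a p = a' p
      · rw [if_pos ((w_cond_iff F hm a' a).2 hcond), if_pos hcond]
        have hsplit : (Fᶜ : Finset (Fin n)) = insert m (insert m F)ᶜ := by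
          rw [Finset.compl_insert, Finset.insert_erase (Finset.mem_compl.2 hm)]
        rw [hsplit, Finset.prod_insert (by simp)]
        congr 2
        funext k
        exact (hcond k.1 (hnd k.1 k.2)).symm
      · rw [if_neg (fun h => hcond ((w_cond_iff F hm a' a).1 h)), if_neg hcond, mul_zero]
    · intro v _ hv
      unfold w
      rw [if_neg, zero_mul, mul_zero]
      intro h
      exact hv (((h m (Finset.mem_insert_self m F)).trans (Function.update_self m v a')).symm)
    · intro h
      exact absurd (Finset.mem_univ (a m)) h
  have h2 : clampedExp Ed π F s a' f
      = ∑ a : ∀ i, A i, ∑ v : A m, π m s (fun k => a' k.1) v *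
          (w Ed π (insert m F) s (Function.update a' m v) a * f a) := by
    rw [clampedExp_eq]
    exact Finset.sum_congr rfl fun a _ => (hcollapse a).symm
  rw [h2, Finset.sum_comm]
  refine Finset.sum_congr rfl fun v _ => ?_
  rw [clampedExp_eq, Finset.mul_sum]

lemma key (hπ : IsPolicy Ed π) (hEd : ∀ i j : Fin n, Ed j i → j < i) (s : St)
    (f : (∀ i, A i) → ℝ) :
    ∀ (L F : Finset (Fin n)) (a' : ∀ i, A i),
      (∀ m ∈ L, m ∉ F) →
      (∀ j : Fin n, j ∉ F → j ∉ L → ∀ k, Ed k j → k ∉ L) →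
      (∀ j ∈ L, ∀ k, Ed k j → k ∈ F ∨ k ∈ L) →
      (∀ a b : ∀ i, A i, (∀ p, p ∉ L → a p = b p) → f a = f b) →
      clampedExp Ed π F s a' f = clampedExp Ed π (F ∪ L) s a' f := by
  intro L
  induction L using Finset.strongInduction with
  | _ L IH =>
    intro F a' hLF h1 hL hf
    rcases L.eq_empty_or_nonempty with rfl | hne
    · rw [Finset.union_empty]
    · have hmL : L.min' hne ∈ L := L.min'_mem hne
      set m := L.min' hne with hmdef
      have hmF : m ∉ F := hLF m hmL
      have hnd : ∀ k, Ed k m → k ∈ F := by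
        intro k hk
        rcases hL m hmL k hk with h | h
        · exact h
        · exact absurd (L.min'_le k h) (not_le.2 (hEd m k hk))
      rw [peel Ed π F m hmF hnd s a' f]
      have hstep : ∀ v : A m,
          clampedExp Ed π (insert m F) s (Function.update a' m v) f
            = clampedExp Ed π (F ∪ L) s a' f := by
        intro v
        have hsub : L.erase m ⊂ L := Finset.erase_ssubset hmL
        have e1 : insert m F ∪ L.erase m = F ∪ L := by
          ext p
          simp only [Finset.mem_union, Finset.mem_insert, Finset.mem_erase]
          constructor
          · rintro ((rfl | h) | ⟨-, h⟩)
            · exact Or.inr hmL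
            · exact Or.inl h
            · exact Or.inr h
          · rintro (h | h)
            · exact Or.inl (Or.inr h)
            · by_cases hpm : p = m
              · exact Or.inl (Or.inl hpm)
              · exact Or.inr ⟨hpm, h⟩
        have hIH := IH (L.erase m) hsub (insert m F) (Function.update a' m v)
          (fun p hp => by
            simp only [Finset.mem_erase] at hp
            simp only [Finset.mem_insert, not_or]
            exact ⟨hp.1, hLF p hp.2⟩)
          (fun j hjF hjL k hk hkL => by
            have hjm : j ≠ m := fun h => hjF (by rw [h]; exact Finset.mem_insert_self m F)
            have hjL' : j ∉ L := fun h => hjL (Finset.mem_erase.2 ⟨hjm, h⟩)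
            have hjF' : j ∉ F := fun h => hjF (Finset.mem_insert_of_mem h)
            exact h1 j hjF' hjL' k hk (Finset.mem_of_mem_erase hkL))
          (fun j hj k hk => by
            rcases hL j (Finset.mem_of_mem_erase hj) k hk with h | h
            · exact Or.inl (Finset.mem_insert_of_mem h)
            · by_cases hkm : k = m
              · exact Or.inl (by rw [hkm]; exact Finset.mem_insert_self m F)
              · exact Or.inr (Finset.mem_erase.2 ⟨hkm, h⟩))
          (fun a b hab => hf a b (fun p hp => hab p (fun h => hp (Finset.mem_of_mem_erase h))))
        rw [hIH, e1]
        refine clampedExp_ext Ed π (F ∪ L) s (fun p => p = m) _ a' f ?_ ?_ ?_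
        · intro k hk; exact Function.update_of_ne hk v a'
        · intro j hj k hk hkm
          have hjF : j ∉ F := fun h => hj (Finset.mem_union_left L h)
          have hjL : j ∉ L := fun h => hj (Finset.mem_union_right F h)
          subst hkm
          exact h1 j hjF hjL m hk hmL
        · intro a b hab
          exact hf a b (fun p hp => hab p (fun h => hp (by rwa [h])))
      calc ∑ v : A m, π m s (fun k => a' k.1) v *
            clampedExp Ed π (insert m F) s (Function.update a' m v) f
          = ∑ v : A m, π m s (fun k => a' k.1) v * clampedExp Ed π (F ∪ L) s a' f :=
            Finset.sum_congr rfl fun v _ => by rw [hstep v]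
        _ = clampedExp Ed π (F ∪ L) s a' f := by
            rw [← Finset.sum_mul, (hπ m s _).2, one_mul]

-- ### supremum helpers

lemma bddR {α : Type*} [Fintype α] (f : α → ℝ) : BddAbove (Set.range f) :=
  (Set.finite_range f).bddAbove

lemma ciSup_add_const {α : Type*} [Fintype α] [Nonempty α] (f : α → ℝ) (c : ℝ) :
    (⨆ a, (f a + c)) = (⨆ a, f a) + c := by
  apply le_antisymm
  · exact ciSup_le fun a => add_le_add_left (le_ciSup (bddR f) a) c
  · have h : (⨆ a, f a) ≤ (⨆ a, (f a + c)) - c :=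
      ciSup_le fun a => le_sub_iff_add_le.2 (le_ciSup (bddR fun a => f a + c) a)
    linarith

lemma ciSup_comp_surj {α β : Type*} [Fintype α] [Fintype β] [Nonempty α]
    (h : α → β) (hs : Function.Surjective h) (f : β → ℝ) :
    (⨆ a, f (h a)) = ⨆ b, f b := by
  have : Nonempty β := Nonempty.map h ‹_›
  apply le_antisymm
  · exact ciSup_le fun a => le_ciSup (bddR f) (h a)
  · refine ciSup_le fun b => ?_
    obtain ⟨a, rfl⟩ := hs b
    exact le_ciSup (bddR fun a => f (h a)) a

lemma ciSup_ciSup_surj {V C X : Type*} [Fintype V] [Fintype C] [Fintype X]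
    [Nonempty V] [Nonempty C] (g : V → C → X) (hs : ∀ x, ∃ v c, g v c = x)
    (f : X → ℝ) : (⨆ v, ⨆ c, f (g v c)) = ⨆ x, f x := by
  have : Nonempty X := ⟨g (Classical.arbitrary V) (Classical.arbitrary C)⟩
  apply le_antisymm
  · exact ciSup_le fun v => ciSup_le fun c => le_ciSup (bddR f) (g v c)
  · refine ciSup_le fun x => ?_
    obtain ⟨v, c, rfl⟩ := hs x
    exact le_trans (le_ciSup (bddR fun c => f (g v c)) c)
      (le_ciSup (bddR fun v => ⨆ c, f (g v c)) v)

-- ### suffix and neighborhood finsets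

variable (Gc : SimpleGraph (Fin n))

lemma mem_ncSet {S : Set (Fin n)} {j : Fin n} :
    j ∈ ncSet Gc S ↔ (∃ k ∈ S, Gc.Adj k j) ∧ j ∉ S := by
  unfold ncSet
  simp [Set.mem_diff, SimpleGraph.mem_neighborSet]

noncomputable def SufFin (t : ℕ) : Finset (Fin n) :=
  Finset.univ.filter (fun j : Fin n => t ≤ j.val)

lemma mem_SufFin {t : ℕ} {j : Fin n} : j ∈ SufFin (n := n) t ↔ t ≤ j.val := by
  unfold SufFin; simp

noncomputable def DtF (t : ℕ) : Finset (Fin n) :=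
  Finset.univ.filter (fun j : Fin n => j ∈ ncSet Gc {k : Fin n | t ≤ k.val})

lemma mem_DtF {t : ℕ} {j : Fin n} :
    j ∈ DtF Gc t ↔ ((∃ k : Fin n, t ≤ k.val ∧ Gc.Adj k j) ∧ ¬ t ≤ j.val) := by
  unfold DtF
  rw [Finset.mem_filter, mem_ncSet]
  simp [Set.mem_setOf_eq]

lemma DtF_n : DtF (n := n) Gc n = ∅ := by
  ext j
  simp only [mem_DtF, Finset.notMem_empty, iff_false, not_and]
  rintro ⟨k, hk, -⟩
  exact absurd hk (by omega)

lemma SufFin_n : SufFin (n := n) n = ∅ := by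
  ext j
  simp only [mem_SufFin, Finset.notMem_empty, iff_false]
  omega

lemma DtF_zero : DtF (n := n) Gc 0 = ∅ := by
  ext j
  simp only [mem_DtF, Finset.notMem_empty, iff_false, not_and]
  rintro -
  omega

lemma SufFin_zero : SufFin (n := n) 0 = Finset.univ := by
  ext j
  simp [mem_SufFin]

lemma SufFin_succ (t : ℕ) (ht : t < n) :
    SufFin (n := n) t = insert ⟨t, ht⟩ (SufFin (t+1)) := by
  ext j
  simp only [mem_SufFin, Finset.mem_insert]
  constructor
  · intro h
    by_cases h1 : t + 1 ≤ j.val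
    · exact Or.inr h1
    · exact Or.inl (Fin.ext (show j.val = t by omega))
  · rintro (rfl | h)
    · simp
    · omega

lemma DtF_succ_subset (t : ℕ) (ht : t < n) :
    DtF Gc (t+1) ⊆ insert ⟨t, ht⟩ (DtF Gc t) := by
  intro k hk
  rw [mem_DtF] at hk
  obtain ⟨⟨p, hp, hadj⟩, hkv⟩ := hk
  by_cases hki : k = ⟨t, ht⟩
  · exact Finset.mem_insert.2 (Or.inl hki)
  · refine Finset.mem_insert.2 (Or.inr (mem_DtF Gc |>.2 ⟨⟨p, by omega, hadj⟩, ?_⟩))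
    have : k.val ≠ t := fun h => hki (Fin.ext h)
    omega

lemma inNbr_mem (hNd : ∀ k : Fin n, {j : Fin n | Ed j k} = ncSet Gc {j : Fin n | k ≤ j})
    {j k : Fin n} (hk : Ed k j) (u : ℕ) (hj : u ≤ j.val) :
    u ≤ k.val ∨ k ∈ DtF Gc u := by
  have hmem : k ∈ ncSet Gc {p : Fin n | j ≤ p} := by
    rw [← hNd j]; exact hk
  rw [mem_ncSet] at hmem
  obtain ⟨⟨p, hp, hadj⟩, hknot⟩ := hmem
  simp only [Set.mem_setOf_eq] at hp hknot
  by_cases hu : u ≤ k.val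
  · exact Or.inl hu
  · refine Or.inr (mem_DtF Gc |>.2 ⟨⟨p, ?_, hadj⟩, hu⟩)
    have := Fin.le_def.1 hp
    omega

lemma filter_Ed_eq (hNd : ∀ k : Fin n, {j : Fin n | Ed j k} = ncSet Gc {j : Fin n | k ≤ j})
    (t : ℕ) (ht : t < n) :
    (Finset.univ.filter fun j => Ed j ⟨t, ht⟩) = DtF Gc t := by
  ext j
  have h1 := Set.ext_iff.1 (hNd ⟨t, ht⟩) j
  simp only [Set.mem_setOf_eq] at h1
  rw [Finset.mem_filter, mem_DtF, h1, mem_ncSet]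
  simp only [Set.mem_setOf_eq, Fin.le_def]
  simp

lemma filter_Ed_eq' (hNd : ∀ k : Fin n, {j : Fin n | Ed j k} = ncSet Gc {j : Fin n | k ≤ j})
    (t : ℕ) (ht : t < n) :
    (Finset.univ.filter fun j => Ed j ⟨t, ht⟩ ∨ j = ⟨t, ht⟩) = insert ⟨t, ht⟩ (DtF Gc t) := by
  ext j
  rw [Finset.mem_filter, Finset.mem_insert, ← filter_Ed_eq Ed Gc hNd t ht, Finset.mem_filter]
  simp only [Finset.mem_univ, true_and]
  exact or_comm

-- ### patching

def patchT (t : ℕ) (a' : ∀ i, A i) (c : (j : {j : Fin n // t ≤ j.val}) → A j.1) :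
    ∀ i, A i :=
  fun m => if h : t ≤ m.val then c ⟨m, h⟩ else a' m

lemma patchT_n (a' : ∀ i, A i) (c : (j : {j : Fin n // n ≤ j.val}) → A j.1) :
    patchT n a' c = a' :=
  funext fun m => dif_neg (by omega)

lemma patchT_zero_surj (a' : ∀ i, A i) : Function.Surjective (patchT (A := A) 0 a') := by
  intro a
  exact ⟨fun j => a j.1, funext fun m => dif_pos (Nat.zero_le _)⟩

lemma patchT_low {t : ℕ} {a' : ∀ i, A i} {c} {m : Fin n} (h : ¬ t ≤ m.val) :
    patchT t a' c m = a' m := dif_neg h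

def mergeC (t : ℕ) (ht : t < n) (ai : A ⟨t, ht⟩)
    (c : (j : {j : Fin n // t + 1 ≤ j.val}) → A j.1) :
    (j : {j : Fin n // t ≤ j.val}) → A j.1 :=
  fun j => if h : t + 1 ≤ j.1.val then c ⟨j.1, h⟩
    else cast (congrArg A (show (⟨t, ht⟩ : Fin n) = j.1 from Fin.ext (by
      have := j.2; simp only [Fin.val_mk]; omega))) ai

lemma patch_merge (t : ℕ) (ht : t < n) (ai : A ⟨t, ht⟩)
    (c : (j : {j : Fin n // t + 1 ≤ j.val}) → A j.1) (a' : ∀ i, A i) :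
    patchT (t+1) (Function.update a' ⟨t, ht⟩ ai) c = patchT t a' (mergeC t ht ai c) := by
  funext m
  unfold patchT mergeC
  by_cases h1 : t + 1 ≤ m.val
  · rw [dif_pos h1, dif_pos (show t ≤ m.val by omega), dif_pos h1]
  · rw [dif_neg h1]
    by_cases h2 : t ≤ m.val
    · have hm : m = ⟨t, ht⟩ := Fin.ext (show m.val = t by omega)
      subst hm
      rw [dif_pos h2, Function.update_self]
      split
      · next h => exact absurd h h1
      · exact (cast_eq _ ai).symm
    · rw [dif_neg h2, Function.update_of_ne (fun h => h2 (by rw [h]))]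

lemma merge_surj (t : ℕ) (ht : t < n) :
    ∀ c' : (j : {j : Fin n // t ≤ j.val}) → A j.1,
      ∃ ai c, mergeC t ht ai c = c' := by
  intro c'
  refine ⟨c' ⟨⟨t, ht⟩, le_refl t⟩, fun j => c' ⟨j.1, by have := j.2; omega⟩, ?_⟩
  funext j
  obtain ⟨jv, hjv⟩ := j
  unfold mergeC
  by_cases h : t + 1 ≤ jv.val
  · rw [dif_pos h]
  · rw [dif_neg h]
    have hjt : jv = ⟨t, ht⟩ := Fin.ext (by simp only [Fin.val_mk]; omega)
    subst hjt
    exact cast_eq _ _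

-- ### local value decomposition

variable (q : (i : Fin n) → (j : Fin n) → St → A i → A j → ℝ)

noncomputable def qS (u : ℕ) (s : St) (a : ∀ i, A i) : ℝ :=
  ∑ i, ∑ j, if u ≤ i.val ∨ u ≤ j.val then q i j s (a i) (a j) else 0

noncomputable def qL (u : ℕ) (s : St) (a : ∀ i, A i) : ℝ :=
  ∑ i, ∑ j, if u ≤ i.val ∨ u ≤ j.val then 0 else q i j s (a i) (a j)

lemma qS_add_qL (u : ℕ) (s : St) (a : ∀ i, A i)
    (Qf : St → (∀ i, A i) → ℝ)
    (hq : ∀ s a, Qf s a = ∑ i, ∑ j, q i j s (a i) (a j)) :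
    Qf s a = qS q u s a + qL q u s a := by
  rw [hq]
  unfold qS qL
  rw [← Finset.sum_add_distrib]
  refine Finset.sum_congr rfl fun i _ => ?_
  rw [← Finset.sum_add_distrib]
  refine Finset.sum_congr rfl fun j _ => ?_
  by_cases h : u ≤ i.val ∨ u ≤ j.val <;> simp [h]

lemma qS_insens
    (hq0 : ∀ i j, ¬(i < j ∧ Gc.Adj i j) → ∀ s ai aj, q i j s ai aj = 0)
    (u : ℕ) (s : St) (a b : ∀ i, A i)
    (hab : ∀ p : Fin n, (u ≤ p.val ∨ p ∈ DtF Gc u) → a p = b p) :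
    qS q u s a = qS q u s b := by
  unfold qS
  refine Finset.sum_congr rfl fun i _ => Finset.sum_congr rfl fun j _ => ?_
  by_cases hij : i < j ∧ Gc.Adj i j
  · by_cases hcond : u ≤ i.val ∨ u ≤ j.val
    · rw [if_pos hcond, if_pos hcond]
      have hji : u ≤ j.val := by
        rcases hcond with h | h
        · have := Fin.lt_def.1 hij.1; omega
        · exact h
      have hi : a i = b i := by
        rcases le_or_gt u i.val with h | h
        · exact hab i (Or.inl h)
        · refine hab i (Or.inr ((mem_DtF Gc).2 ⟨⟨j, hji, hij.2.symm⟩, by omega⟩))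
      rw [hi, hab j (Or.inl hji)]
    · rw [if_neg hcond, if_neg hcond]
  · simp [hq0 i j hij]

lemma qL_insens (u : ℕ) (s : St) (a b : ∀ i, A i)
    (hab : ∀ p : Fin n, ¬ u ≤ p.val → a p = b p) :
    qL q u s a = qL q u s b := by
  unfold qL
  refine Finset.sum_congr rfl fun i _ => Finset.sum_congr rfl fun j _ => ?_
  by_cases hcond : u ≤ i.val ∨ u ≤ j.val
  · rw [if_pos hcond, if_pos hcond]
  · rw [if_neg hcond, if_neg hcond]
    push_neg at hcond
    rw [hab i (by omega), hab j (by omega)]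

-- ### the inductive step

lemma step [∀ i, Nonempty (A i)]
    (hπ : IsPolicy Ed π) (hEd : ∀ i j : Fin n, Ed j i → j < i)
    (hNd : ∀ k : Fin n, {j : Fin n | Ed j k} = ncSet Gc {j : Fin n | k ≤ j})
    (hq0 : ∀ i j, ¬(i < j ∧ Gc.Adj i j) → ∀ s ai aj, q i j s ai aj = 0)
    (Qf : St → (∀ i, A i) → ℝ)
    (hq : ∀ s a, Qf s a = ∑ i, ∑ j, q i j s (a i) (a j))
    (u : ℕ)
    (hIH : ∀ (s : St) (a : ∀ i, A i),
      clampedExp Ed π (DtF Gc u) s a (Qf s)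
        = ⨆ c : ((j : {j : Fin n // u ≤ j.val}) → A j.1),
            clampedExp Ed π (DtF Gc u ∪ SufFin u) s (patchT u a c) (Qf s))
    (C : Finset (Fin n)) (hC1 : DtF Gc u ⊆ C) (hC2 : ∀ j ∈ C, j.val < u)
    (s : St) (a : ∀ i, A i) :
    clampedExp Ed π C s a (Qf s)
      = ⨆ c : ((j : {j : Fin n // u ≤ j.val}) → A j.1),
          clampedExp Ed π (C ∪ SufFin u) s (patchT u a c) (Qf s) := by
  -- the pointwise split of Qf
  have hQsplit : ∀ s', (Qf s') = fun a => qS q u s' a + qL q u s' a :=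
    fun s' => funext fun a => qS_add_qL q u s' a Qf hq
  -- part (A): decomposition of a clamped expectation
  have hA : ∀ (C' : Finset (Fin n)), DtF Gc u ⊆ C' → (∀ j ∈ C', j.val < u) →
      ∀ a' : ∀ i, A i,
      clampedExp Ed π C' s a' (Qf s)
        = clampedExp Ed π (SufFin u)ᶜ s a' (qS q u s)
          + clampedExp Ed π (C' ∪ SufFin u) s a' (qL q u s) := by
    intro C' hD hlt a'
    rw [hQsplit s, clampedExp_add]
    congr 1
    · -- marginalize the irrelevant low coordinates of qS
      have hkey := key Ed π hπ hEd s (qS q u s) (C'ᶜ \ SufFin u) C' a'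
        (fun m hm => (Finset.mem_compl.1 (Finset.mem_sdiff.1 hm).1))
        (fun j hjF hjL k hk hkL => by
          -- j is free and not in L, hence j ∈ SufFin u
          have hjS : u ≤ j.val := by
            by_contra hjS
            exact hjL (Finset.mem_sdiff.2 ⟨Finset.mem_compl.2 hjF,
              fun h => hjS (mem_SufFin.1 h)⟩)
          have hkS := Finset.mem_sdiff.1 hkL
          rcases inNbr_mem Ed Gc hNd hk u hjS with h | h
          · exact hkS.2 (mem_SufFin.2 h)
          · exact Finset.mem_compl.1 hkS.1 (hD h)
        )
        (fun j hj k hk => by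
          have hjS := Finset.mem_sdiff.1 hj
          have hjv : ¬ u ≤ j.val := fun h => hjS.2 (mem_SufFin.2 h)
          have hkv : k.val < u := by
            have := Fin.lt_def.1 (hEd j k hk)
            omega
          by_cases hkC : k ∈ C'
          · exact Or.inl hkC
          · exact Or.inr (Finset.mem_sdiff.2 ⟨Finset.mem_compl.2 hkC,
              fun h => by have := mem_SufFin.1 h; omega⟩))
        (fun x y hxy => qS_insens Gc q hq0 u s x y (fun p hp => hxy p (by
          rintro hpL
          have hpS := Finset.mem_sdiff.1 hpL
          rcases hp with h | h
          · exact hpS.2 (mem_SufFin.2 h)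
          · exact Finset.mem_compl.1 hpS.1 (hD h))))
      rw [hkey]
      congr 1
      ext p
      simp only [Finset.mem_union, Finset.mem_sdiff, Finset.mem_compl, mem_SufFin]
      constructor
      · rintro (h | ⟨-, h⟩)
        · exact fun hs => by have := hlt p h; omega
        · exact h
      · intro h
        by_cases hpC : p ∈ C'
        · exact Or.inl hpC
        · exact Or.inr ⟨hpC, h⟩
    · -- marginalize the suffix coordinates of qL
      exact key Ed π hπ hEd s (qL q u s) (SufFin u) C' a'
        (fun m hm => fun h => by have := hlt m h; have := mem_SufFin.1 hm; omega)
        (fun j hjF hjL k hk hkS => by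
          have hjv : ¬ u ≤ j.val := fun h => hjL (mem_SufFin.2 h)
          have := Fin.lt_def.1 (hEd j k hk)
          have := mem_SufFin.1 hkS
          omega)
        (fun j hj k hk => by
          rcases inNbr_mem Ed Gc hNd hk u (mem_SufFin.1 hj) with h | h
          · exact Or.inr (mem_SufFin.2 h)
          · exact Or.inl (hD h))
        (fun x y hxy => qL_insens q u s x y (fun p hp => hxy p
          (fun h => hp (mem_SufFin.1 h))))
  have hB : ∀ (C' : Finset (Fin n)), DtF Gc u ⊆ C' → (∀ j ∈ C', j.val < u) →
      ∀ (a' : ∀ i, A i) (c : (j : {j : Fin n // u ≤ j.val}) → A j.1),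
      clampedExp Ed π (C' ∪ SufFin u) s (patchT u a' c) (Qf s)
        = qS q u s (patchT u a' c) + clampedExp Ed π (C' ∪ SufFin u) s a' (qL q u s) := by
    intro C' hD hlt a' c
    rw [hQsplit s, clampedExp_add]
    congr 1
    · have hkey := key Ed π hπ hEd s (qS q u s) ((C' ∪ SufFin u)ᶜ) (C' ∪ SufFin u)
        (patchT u a' c)
        (fun m hm => Finset.mem_compl.1 hm)
        (fun j hjF hjL k hk hkL => absurd (Finset.mem_compl.2 hjF) hjL)
        (fun j hj k hk => by
          by_cases h : k ∈ C' ∪ SufFin u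
          · exact Or.inl h
          · exact Or.inr (Finset.mem_compl.2 h))
        (fun x y hxy => qS_insens Gc q hq0 u s x y (fun p hp => hxy p (by
          intro hpL
          have hpF := Finset.mem_compl.1 hpL
          rcases hp with h | h
          · exact hpF (Finset.mem_union_right _ (mem_SufFin.2 h))
          · exact hpF (Finset.mem_union_left _ (hD h)))))
      rw [hkey, Finset.union_compl, clampedExp_full]
    · refine clampedExp_ext Ed π (C' ∪ SufFin u) s (fun p => u ≤ p.val) _ _ (qL q u s)
        ?_ ?_ ?_
      · intro k hk; exact patchT_low hk
      · intro j hj k hk hku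
        have hjv : ¬ u ≤ j.val := fun h => hj (Finset.mem_union_right _ (mem_SufFin.2 h))
        have := Fin.lt_def.1 (hEd j k hk)
        omega
      · intro x y hxy
        exact qL_insens q u s x y hxy
  have hDlt : ∀ j ∈ DtF Gc u, j.val < u := fun j hj => by
    have := ((mem_DtF Gc).1 hj).2; omega
  have hcore : clampedExp Ed π (SufFin u)ᶜ s a (qS q u s)
      = ⨆ c : ((j : {j : Fin n // u ≤ j.val}) → A j.1), qS q u s (patchT u a c) := by
    have h1 := hIH s a
    rw [hA (DtF Gc u) (subset_refl _) hDlt a] at h1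
    have h2 : (⨆ c : ((j : {j : Fin n // u ≤ j.val}) → A j.1),
        clampedExp Ed π (DtF Gc u ∪ SufFin u) s (patchT u a c) (Qf s))
        = (⨆ c : ((j : {j : Fin n // u ≤ j.val}) → A j.1), qS q u s (patchT u a c))
          + clampedExp Ed π (DtF Gc u ∪ SufFin u) s a (qL q u s) := by
      rw [← ciSup_add_const]
      exact iSup_congr fun c => hB (DtF Gc u) (subset_refl _) hDlt a c
    rw [h2] at h1
    exact add_right_cancel h1
  rw [hA C hC1 hC2 a, hcore, ← ciSup_add_const]
  exact iSup_congr fun c => (hB C hC1 hC2 a c).symm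

lemma main_ind [∀ i, Nonempty (A i)]
    (hπ : IsPolicy Ed π) (hEd : ∀ i j : Fin n, Ed j i → j < i)
    (hNd : ∀ k : Fin n, {j : Fin n | Ed j k} = ncSet Gc {j : Fin n | k ≤ j})
    (hq0 : ∀ i j, ¬(i < j ∧ Gc.Adj i j) → ∀ s ai aj, q i j s ai aj = 0)
    (Qf : St → (∀ i, A i) → ℝ)
    (hq : ∀ s a, Qf s a = ∑ i, ∑ j, q i j s (a i) (a j))
    (hopt : GdLocallyOpt Ed π Qf) :
    ∀ (d t : ℕ), t + d = n → ∀ (s : St) (a : ∀ i, A i),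
      clampedExp Ed π (DtF Gc t) s a (Qf s)
        = ⨆ c : ((j : {j : Fin n // t ≤ j.val}) → A j.1),
            clampedExp Ed π (DtF Gc t ∪ SufFin t) s (patchT t a c) (Qf s) := by
  intro d
  induction d with
  | zero =>
    intro t ht s a
    have htn : t = n := by omega
    subst htn
    rw [DtF_n, SufFin_n, Finset.union_empty]
    simp only [patchT_n]
    exact ciSup_const.symm
  | succ d IH =>
    intro t ht s a
    have htn : t < n := by omega
    have h0 : clampedExp Ed π (DtF Gc t) s a (Qf s)
        = ⨆ ai : A ⟨t, htn⟩, clampedExp Ed π (insert ⟨t, htn⟩ (DtF Gc t)) s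
            (Function.update a ⟨t, htn⟩ ai) (Qf s) := by
      rw [← filter_Ed_eq' Ed Gc hNd t htn, ← filter_Ed_eq Ed Gc hNd t htn]
      exact hopt ⟨t, htn⟩ s a
    have hCsub : DtF Gc (t+1) ⊆ insert ⟨t, htn⟩ (DtF Gc t) := DtF_succ_subset Gc t htn
    have hClt : ∀ j ∈ insert ⟨t, htn⟩ (DtF Gc t), j.val < t + 1 := by
      intro j hj
      rcases Finset.mem_insert.1 hj with rfl | hj
      · simp
      · have := ((mem_DtF Gc).1 hj).2; omega
    have hFeq : insert ⟨t, htn⟩ (DtF Gc t) ∪ SufFin (t+1) = DtF Gc t ∪ SufFin t := by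
      ext p
      simp only [Finset.mem_union, Finset.mem_insert, mem_SufFin]
      constructor
      · rintro ((rfl | h) | h)
        · exact Or.inr (by simp)
        · exact Or.inl h
        · exact Or.inr (by omega)
      · rintro (h | h)
        · exact Or.inl (Or.inr h)
        · by_cases h1 : t + 1 ≤ p.val
          · exact Or.inr h1
          · exact Or.inl (Or.inl (Fin.ext (show p.val = t by omega)))
    have hstep : ∀ ai : A ⟨t, htn⟩,
        clampedExp Ed π (insert ⟨t, htn⟩ (DtF Gc t)) s
            (Function.update a ⟨t, htn⟩ ai) (Qf s)
          = ⨆ c : ((j : {j : Fin n // t + 1 ≤ j.val}) → A j.1),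
              clampedExp Ed π (DtF Gc t ∪ SufFin t) s
                (patchT t a (mergeC t htn ai c)) (Qf s) := by
      intro ai
      rw [step Ed π Gc q hπ hEd hNd hq0 Qf hq (t+1) (IH (t+1) (by omega))
        (insert ⟨t, htn⟩ (DtF Gc t)) hCsub hClt s (Function.update a ⟨t, htn⟩ ai)]
      refine iSup_congr fun c => ?_
      rw [hFeq, patch_merge t htn ai c a]
    have h1 : (⨆ ai : A ⟨t, htn⟩, clampedExp Ed π (insert ⟨t, htn⟩ (DtF Gc t)) s
            (Function.update a ⟨t, htn⟩ ai) (Qf s))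
        = ⨆ ai : A ⟨t, htn⟩, ⨆ c : ((j : {j : Fin n // t + 1 ≤ j.val}) → A j.1),
            clampedExp Ed π (DtF Gc t ∪ SufFin t) s
              (patchT t a (mergeC t htn ai c)) (Qf s) := iSup_congr hstep
    rw [h0, h1]
    exact ciSup_ciSup_surj (mergeC t htn) (merge_surj t htn)
      (fun c' => clampedExp Ed π (DtF Gc t ∪ SufFin t) s (patchT t a c') (Qf s))

end Helpers
/-- Theorem: optimality of the ADG. In a finite Markov game, let `π` be a
stochastic action-dependent joint policy associated with an ADG (edge relation `Ed`,
topologically sorted), let `Vπ` be its value function (the fixed point of `T_π`, which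
here is expressed via the clamped expectation with no coordinate clamped), suppose `π`
is `G_d`-locally optimal w.r.t. `Q^{Vπ}`, let `G_c` be a CG of `Q^{Vπ}`, and suppose
`N_d(i) = N_c(i^{[+]})` for every `i`. Then `π` is globally optimal: `Vπ = V*`, where
`V*` is the fixed point of the Bellman optimality operator. -/
theorem stmt6 {n : ℕ} {St : Type*} [Fintype St] {A : Fin n → Type*}
    [∀ i, Fintype (A i)] [∀ i, Nonempty (A i)]
    (P : St → (∀ i, A i) → St → ℝ) (r : St → (∀ i, A i) → ℝ) (γ : ℝ)
    (hP0 : ∀ s a s', 0 ≤ P s a s') (hP1 : ∀ s a, ∑ s', P s a s' = 1)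
    (hγ0 : 0 ≤ γ) (hγ1 : γ < 1)
    (Ed : Fin n → Fin n → Prop) [DecidableRel Ed]
    (hEd : ∀ i j : Fin n, Ed j i → j < i)
    (π : (i : Fin n) → St → ((j : {j : Fin n // Ed j i}) → A j.1) → A i → ℝ)
    (hπ : IsPolicy Ed π)
    (Vπ : St → ℝ)
    (hVπ : ∀ (s : St) (a' : ∀ j, A j),
        Vπ s = clampedExp Ed π ∅ s a' (QV P r γ Vπ s))
    (hopt : GdLocallyOpt Ed π (QV P r γ Vπ))
    (Gc : SimpleGraph (Fin n))
    (hCG : IsCG Gc (QV P r γ Vπ))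
    (hNd : ∀ k : Fin n, {j : Fin n | Ed j k} = ncSet Gc {j : Fin n | k ≤ j})
    (Vstar : St → ℝ)
    (hVstar : ∀ s, Vstar s = ⨆ a : ∀ i, A i, QV P r γ Vstar s a) :
    Vπ = Vstar := by
  classical
  obtain ⟨q, hq0, hq⟩ := hCG
  have hfix : ∀ s, Vπ s = ⨆ a : ∀ i, A i, QV P r γ Vπ s a := by
    intro s
    have a0 : ∀ i, A i := fun i => Classical.arbitrary _
    have h0 := main_ind Ed π Gc q hπ hEd hNd hq0 (QV P r γ Vπ) hq hopt n 0
      (by omega) s a0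
    rw [DtF_zero, SufFin_zero, Finset.empty_union] at h0
    calc Vπ s = clampedExp Ed π ∅ s a0 (QV P r γ Vπ s) := hVπ s a0
      _ = ⨆ c : ((j : {j : Fin n // 0 ≤ j.val}) → A j.1),
            clampedExp Ed π Finset.univ s (patchT 0 a0 c) (QV P r γ Vπ s) := h0
      _ = ⨆ c : ((j : {j : Fin n // 0 ≤ j.val}) → A j.1),
            QV P r γ Vπ s (patchT 0 a0 c) :=
          iSup_congr fun c => clampedExp_full Ed π s _ _
      _ = ⨆ a : ∀ i, A i, QV P r γ Vπ s a :=
          ciSup_comp_surj (patchT 0 a0) (patchT_zero_surj a0) (QV P r γ Vπ s)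
  funext s
  obtain ⟨s₀, -, hmax⟩ := Finset.exists_max_image Finset.univ
    (fun s' => |Vπ s' - Vstar s'|) ⟨s, Finset.mem_univ s⟩
  set M := |Vπ s₀ - Vstar s₀| with hM
  have hkey : ∀ s', |Vπ s' - Vstar s'| ≤ γ * M := by
    intro s'
    have hb : ∀ a, QV P r γ Vπ s' a ≤ QV P r γ Vstar s' a + γ * M ∧
        QV P r γ Vstar s' a ≤ QV P r γ Vπ s' a + γ * M := by
      intro a
      have hsum : (∑ s'', P s' a s'' * Vπ s'') - ∑ s'', P s' a s'' * Vstar s''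
          = ∑ s'', P s' a s'' * (Vπ s'' - Vstar s'') := by
        rw [← Finset.sum_sub_distrib]
        exact Finset.sum_congr rfl fun _ _ => by ring
      have hd : QV P r γ Vπ s' a - QV P r γ Vstar s' a
          = γ * ∑ s'', P s' a s'' * (Vπ s'' - Vstar s'') := by
        simp only [QV]
        linear_combination γ * hsum
      have habs : |∑ s'', P s' a s'' * (Vπ s'' - Vstar s'')| ≤ M :=
        calc |∑ s'', P s' a s'' * (Vπ s'' - Vstar s'')|
            ≤ ∑ s'', |P s' a s'' * (Vπ s'' - Vstar s'')| :=
              Finset.abs_sum_le_sum_abs _ _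
          _ ≤ ∑ s'', P s' a s'' * M := by
              refine Finset.sum_le_sum fun s'' _ => ?_
              rw [abs_mul, abs_of_nonneg (hP0 s' a s'')]
              exact mul_le_mul_of_nonneg_left (hmax s'' (Finset.mem_univ s''))
                (hP0 s' a s'')
          _ = M := by rw [← Finset.sum_mul, hP1 s' a, one_mul]
      have h2 : |QV P r γ Vπ s' a - QV P r γ Vstar s' a| ≤ γ * M := by
        rw [hd, abs_mul, abs_of_nonneg hγ0]
        exact mul_le_mul_of_nonneg_left habs hγ0
      rcases abs_le.1 h2 with ⟨hl, hr⟩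
      constructor <;> linarith
    have hs1 : Vπ s' ≤ Vstar s' + γ * M := by
      rw [hfix s', hVstar s']
      refine ciSup_le fun a => ?_
      calc QV P r γ Vπ s' a ≤ QV P r γ Vstar s' a + γ * M := (hb a).1
        _ ≤ (⨆ a', QV P r γ Vstar s' a') + γ * M :=
            add_le_add_left (le_ciSup (bddR _) a) _
    have hs2 : Vstar s' ≤ Vπ s' + γ * M := by
      rw [hfix s', hVstar s']
      refine ciSup_le fun a => ?_
      calc QV P r γ Vstar s' a ≤ QV P r γ Vπ s' a + γ * M := (hb a).2
        _ ≤ (⨆ a', QV P r γ Vπ s' a') + γ * M :=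
            add_le_add_left (le_ciSup (bddR _) a) _
    exact abs_sub_le_iff.2 ⟨by linarith, by linarith⟩
  have hMnn : 0 ≤ M := abs_nonneg _
  have hM0 : M ≤ 0 := by nlinarith [hkey s₀]
  have h0 : |Vπ s - Vstar s| ≤ 0 := le_trans (hkey s) (by nlinarith)
  have h1 : Vπ s - Vstar s = 0 :=
    abs_eq_zero.1 (le_antisymm h0 (abs_nonneg _))
  linarith
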